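/- Let E be a directed graph, A a C*-algebra, {S_e, P_v} a Cuntz-Krieger E-family in A, and I a closed two-sided ideal of A. Then H_I := {v ∈ E⁰ : P_v ∈ I} is a saturated hereditary subset of E⁰. -/
import Mathlib

set_option linter.unusedSectionVars false


/-- A (countable) directed graph `E = (E⁰, E¹, r, s)`:
a set of vertices, a set of edges, and range and source maps. -/
structure Digraph' where
  V : Type
  E : Type
  src : E → V
  rng : E → V

namespace Digraph'

variable (G : Digraph')

/-- `v ≥ w`: there is a path (possibly of length zero) from `v` to `w`. -/
def Reach (v w : G.V) : Prop :=
  Relation.ReflTransGen (fun a b : G.V => ∃ e : G.E, G.src e = a ∧ G.rng e = b) v w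

/-- A set `H` of vertices is hereditary if `v ∈ H` and `v ≥ w` imply `w ∈ H`. -/
def Hereditary (H : Set G.V) : Prop :=
  ∀ ⦃v w : G.V⦄, v ∈ H → G.Reach v w → w ∈ H

/-- A set `X` of vertices is saturated if every vertex `v` with `0 < |s⁻¹(v)| < ∞`
all of whose emitted edges have range in `X` itself belongs to `X`. -/
def Saturated (X : Set G.V) : Prop :=
  ∀ v : G.V, (G.src ⁻¹' {v}).Finite → (G.src ⁻¹' {v}).Nonempty →
    (∀ e : G.E, G.src e = v → G.rng e ∈ X) → v ∈ X

/-- The saturation `Σ(X)`: the smallest saturated set containing `X`. -/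
def saturation (X : Set G.V) : Set G.V :=
  ⋂₀ {Y : Set G.V | G.Saturated Y ∧ X ⊆ Y}

/-- `ΣH(X)`: the smallest saturated hereditary set containing `X`. -/
def satHered (X : Set G.V) : Set G.V :=
  ⋂₀ {Y : Set G.V | G.Saturated Y ∧ G.Hereditary Y ∧ X ⊆ Y}

end Digraph'

namespace Digraph'

/-- A Cuntz-Krieger `E`-family in a C*-algebra `A`: mutually orthogonal projections
`P v`, elements `S e` with mutually orthogonal range projections, satisfying the
Cuntz-Krieger relations (G1)–(G3). -/
structure IsCKFamily (G : Digraph') {A : Type*} [NonUnitalCStarAlgebra A]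
    [PartialOrder A] [StarOrderedRing A] (P : G.V → A) (S : G.E → A) : Prop where
  proj_star : ∀ v : G.V, star (P v) = P v
  proj_idem : ∀ v : G.V, P v * P v = P v
  proj_orth : ∀ v w : G.V, v ≠ w → P v * P w = 0
  range_orth : ∀ e f : G.E, e ≠ f → (S e * star (S e)) * (S f * star (S f)) = 0
  ck1 : ∀ e : G.E, star (S e) * S e = P (G.rng e)
  ck2 : ∀ e : G.E, S e * star (S e) ≤ P (G.src e)
  ck3 : ∀ v : G.V, (G.src ⁻¹' {v}).Finite → (G.src ⁻¹' {v}).Nonempty →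
    P v = ∑ᶠ e ∈ G.src ⁻¹' {v}, S e * star (S e)

end Digraph'

/-- `J` is a closed two-sided ideal of the subalgebra (given as the subset `B`)
of the ambient C*-algebra. -/
def IsClosedIdealOf {A : Type*} [NonUnitalCStarAlgebra A] (B J : Set A) : Prop :=
  J ⊆ B ∧ IsClosed J ∧ (0 : A) ∈ J ∧
  (∀ a b : A, a ∈ J → b ∈ J → a + b ∈ J) ∧
  (∀ (c : ℂ) (a : A), a ∈ J → c • a ∈ J) ∧
  (∀ b a : A, b ∈ B → a ∈ J → b * a ∈ J ∧ a * b ∈ J)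

/-- The closed two-sided ideal of the subalgebra `B` generated by a subset `X`. -/
def closedIdealGenIn {A : Type*} [NonUnitalCStarAlgebra A] (B X : Set A) : Set A :=
  ⋂₀ {J : Set A | IsClosedIdealOf B J ∧ X ⊆ J}

/-- The C*-subalgebra `C*(S, P)` of `A` generated by a Cuntz-Krieger family,
regarded as a subset of `A`: the closure of the non-unital star subalgebra
generated by the `S e` and the `P v`. -/
def cstarSP {A : Type*} [NonUnitalCStarAlgebra A] (G : Digraph')
    (P : G.V → A) (S : G.E → A) : Set A :=
  closure ((NonUnitalStarAlgebra.adjoin ℂ (Set.range S ∪ Set.range P) :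
    NonUnitalStarSubalgebra ℂ A) : Set A)

section AuxCK
variable {A : Type*} [NonUnitalCStarAlgebra A] [PartialOrder A] [StarOrderedRing A]

/-- If `star s * s` is idempotent, then `s * (star s * s) = s`. -/
lemma partial_isometry_aux (s : A) (hp : (star s * s) * (star s * s) = star s * s) :
    s * (star s * s) = s := by
  have h : star (s * (star s * s) - s) * (s * (star s * s) - s) = 0 := by
    have e1 : star (s * (star s * s) - s) = (star s * s) * star s - star s := by
      simp [star_sub, star_mul, mul_assoc]
    rw [e1]
    have : ((star s * s) * star s - star s) * (s * (star s * s) - s)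
        = (star s * s) * ((star s * s) * (star s * s)) - (star s * s) * (star s * s)
          - (star s * s) * (star s * s) + star s * s := by
      noncomm_ring
    rw [this, hp, hp]
    abel
  have := CStarRing.star_mul_self_eq_zero_iff _ |>.mp h
  exact sub_eq_zero.mp this

/-- A projection dominated by a projection is absorbed by it. -/
lemma proj_dom (p q : A) (hps : star p = p) (hpp : p * p = p)
    (hqs : star q = q) (hqq : q * q = q) (hle : q ≤ p) : p * q = q := by
  have h1 : q ≤ q * p * q := by
    have := star_left_conjugate_le_conjugate hle q
    rwa [hqs, hqq, hqq] at this
  have h2 : star (q - p * q) * (q - p * q) = q - q * p * q := by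
    have e1 : star (q - p * q) = q - q * p := by simp [star_sub, star_mul, hqs, hps]
    rw [e1]
    have : (q - q * p) * (q - p * q)
        = q * q - q * (p * q) - q * p * q + q * p * (p * q) := by noncomm_ring
    rw [this, hqq, ← mul_assoc (q*p) p q, mul_assoc q p p, hpp]
    noncomm_ring
  have h3 : q - q * p * q = 0 := le_antisymm
    (sub_nonpos.mpr h1)
    (h2 ▸ star_mul_self_nonneg _)
  have h4 : q - p * q = 0 := CStarRing.star_mul_self_eq_zero_iff _ |>.mp (by rw [h2, h3])
  exact (sub_eq_zero.mp h4).symm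

end AuxCK

/-- For a Cuntz-Krieger `E`-family `{S, P}` in `A` and a closed
two-sided ideal `I` of `A`, the set `H_I = {v : P v ∈ I}` is saturated and hereditary. -/

theorem stmt_11 (G : Digraph') [Countable G.V] [Countable G.E]
    {A : Type*} [NonUnitalCStarAlgebra A] [PartialOrder A] [StarOrderedRing A]
    (P : G.V → A) (S : G.E → A) (hCK : G.IsCKFamily P S)
    (I : Set A) (hI : IsClosedIdealOf (Set.univ : Set A) I) :
    G.Saturated {v : G.V | P v ∈ I} ∧ G.Hereditary {v : G.V | P v ∈ I} := by
  obtain ⟨-, -, h0, hadd, -, hmul⟩ := hI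
  -- basic facts for each edge
  have hS : ∀ e : G.E, S e * (star (S e) * S e) = S e := by
    intro e
    refine partial_isometry_aux _ ?_
    rw [hCK.ck1]; exact hCK.proj_idem _
  -- S e = P (src e) * S e
  have hPS : ∀ e : G.E, S e = P (G.src e) * S e := by
    intro e
    have hq_idem : (S e * star (S e)) * (S e * star (S e)) = S e * star (S e) := by
      have h : (S e * star (S e)) * (S e * star (S e))
          = (S e * (star (S e) * S e)) * star (S e) := by noncomm_ring
      rw [h, hS]
    have hq_star : star (S e * star (S e)) = S e * star (S e) := by
      simp [star_mul]
    have hpq : P (G.src e) * (S e * star (S e)) = S e * star (S e) :=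
      proj_dom _ _ (hCK.proj_star _) (hCK.proj_idem _) hq_star hq_idem (hCK.ck2 e)
    have h1 : S e = (S e * star (S e)) * S e := by
      rw [mul_assoc]; exact (hS e).symm
    calc S e = (S e * star (S e)) * S e := h1
      _ = (P (G.src e) * (S e * star (S e))) * S e := by rw [hpq]
      _ = P (G.src e) * ((S e * star (S e)) * S e) := by rw [mul_assoc]
      _ = P (G.src e) * S e := by rw [← h1]
  -- hereditary step along one edge
  have hstep : ∀ e : G.E, P (G.src e) ∈ I → P (G.rng e) ∈ I := by
    intro e hv
    have h1 : (star (S e) * P (G.src e)) * S e = P (G.rng e) := by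
      rw [mul_assoc, ← hPS e, hCK.ck1]
    rw [← h1]
    have ha : star (S e) * P (G.src e) ∈ I := (hmul (star (S e)) _ trivial hv).1
    exact (hmul (S e) _ trivial ha).2
  constructor
  · -- saturated
    intro v hfin hne hall
    have hterm : ∀ e : G.E, G.src e = v → S e * star (S e) ∈ I := by
      intro e he
      have hr : P (G.rng e) ∈ I := hall e he
      have hSP : S e * P (G.rng e) = S e := by rw [← hCK.ck1]; exact hS e
      have h1 : S e * star (S e) = S e * (P (G.rng e) * star (S e)) := by
        rw [← mul_assoc, hSP]
      rw [h1]
      have ha : P (G.rng e) * star (S e) ∈ I := (hmul (star (S e)) _ trivial hr).2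
      exact (hmul (S e) _ trivial ha).1
    show P v ∈ I
    rw [hCK.ck3 v hfin hne, ← Set.Finite.coe_toFinset hfin, finsum_mem_coe_finset]
    refine Finset.sum_induction _ (· ∈ I) hadd h0 ?_
    intro e he
    exact hterm e (by simpa using (Set.Finite.mem_toFinset hfin).mp he)
  · -- hereditary
    intro v w hv hreach
    induction hreach with
    | refl => exact hv
    | tail _ hbc ih =>
      obtain ⟨e, hsrc, hrng⟩ := hbc
      have := hstep e (by rw [hsrc]; exact ih)
      rwa [hrng] at this
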